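/- For every natural number n, the n-th Catalan number satisfies C_n = ∑_{k=0}^{⌊n/2⌋} ( C(n,k) − C(n,k−1) )², where C(n,k) denotes the binomial coefficient with the convention C(n,−1) = 0, and C_n = C(2n,n)/(n+1) is the n-th Catalan number. -/
import Mathlib

open Finset

private def bsq (n k : ℕ) : ℤ :=
  ((n.choose k : ℤ) - (if k = 0 then 0 else (n.choose (k - 1) : ℤ))) ^ 2

private lemma bsq_refl (n : ℕ) {k : ℕ} (hk : k ≤ n + 1) : bsq n (n + 1 - k) = bsq n k := by
  unfold bsq
  rcases Nat.eq_zero_or_pos k with h0 | h1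
  · subst h0
    simp [Nat.choose_self, Nat.choose_succ_self]
  rcases eq_or_lt_of_le hk with h2 | h2
  · subst h2
    simp [Nat.choose_succ_self, Nat.choose_self, Nat.add_sub_cancel_left]
  · have hkn : k ≤ n := by omega
    have hne : n + 1 - k ≠ 0 := by omega
    rw [if_neg hne, if_neg (by omega : k ≠ 0)]
    have e1 : n.choose (n + 1 - k) = n.choose (k - 1) := by
      have := Nat.choose_symm (by omega : k - 1 ≤ n)
      rwa [show n - (k - 1) = n + 1 - k by omega] at this
    have e2 : n.choose (n + 1 - k - 1) = n.choose k := by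
      rw [show n + 1 - k - 1 = n - k by omega]
      exact Nat.choose_symm hkn
    rw [e1, e2]
    ring

private lemma vand (n k : ℕ) :
    (n + n).choose k = ∑ i ∈ range (k + 1), n.choose i * n.choose (k - i) := by
  rw [Nat.add_choose_eq, Finset.Nat.sum_antidiagonal_eq_sum_range_succ_mk]

private lemma sum_sq (n : ℕ) :
    ∑ k ∈ range (n + 1), ((n.choose k : ℤ)) ^ 2 = ((n + n).choose n : ℤ) := by
  have h := vand n n
  have h2 : ∑ i ∈ range (n + 1), n.choose i * n.choose (n - i)
      = ∑ i ∈ range (n + 1), n.choose i * n.choose i := by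
    refine Finset.sum_congr rfl fun i hi => ?_
    rw [Nat.choose_symm (by simpa using Nat.lt_succ_iff.mp (mem_range.mp hi))]
  rw [h2] at h
  have := congrArg (Nat.cast : ℕ → ℤ) h
  push_cast at this
  rw [this]
  refine Finset.sum_congr rfl fun i _ => ?_
  ring

private lemma sum_cross (n : ℕ) :
    ∑ k ∈ range (n + 2),
        (n.choose k : ℤ) * (if k = 0 then 0 else (n.choose (k - 1) : ℤ))
      = ((n + n).choose (n + 1) : ℤ) := by
  have h := vand n (n + 1)
  have h2 : ∑ i ∈ range (n + 2), (n.choose i * n.choose (n + 1 - i) : ℤ)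
      = ∑ i ∈ range (n + 2),
          (n.choose i : ℤ) * (if i = 0 then 0 else (n.choose (i - 1) : ℤ)) := by
    refine Finset.sum_congr rfl fun i hi => ?_
    have hi' : i < n + 2 := mem_range.mp hi
    rcases Nat.eq_zero_or_pos i with h0 | h1
    · subst h0; simp [Nat.choose_succ_self]
    · rw [if_neg (by omega)]
      congr 2
      have := Nat.choose_symm (by omega : i - 1 ≤ n)
      rw [show n - (i - 1) = n + 1 - i by omega] at this
      exact this
  rw [← h2]
  have := congrArg (Nat.cast : ℕ → ℤ) h
  push_cast at this
  rw [this]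

private lemma half_sum (n : ℕ) :
    ∑ k ∈ range (n + 2), bsq n k = 2 * ∑ k ∈ range (n / 2 + 1), bsq n k := by
  set m := n / 2 with hm
  rw [← Finset.sum_range_add_sum_Ico _ (by omega : m + 1 ≤ n + 2)]
  have hB : ∑ k ∈ Ico (m + 1) (n + 2), bsq n k = ∑ k ∈ range (n + 1 - m), bsq n k := by
    have h1 : ∑ k ∈ Ico (m + 1) (n + 2), bsq n k
        = ∑ k ∈ Ico (m + 1) (n + 2), bsq n (n + 1 - k) := by
      refine Finset.sum_congr rfl fun k hk => ?_
      have hk' := Finset.mem_Ico.mp hk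
      exact (bsq_refl n (by omega)).symm
    rw [h1, Finset.sum_Ico_reflect _ _ (le_refl (n + 2)), Finset.range_eq_Ico]
    rw [show n + 1 + 1 - (n + 2) = 0 from by omega,
      show n + 1 + 1 - (m + 1) = n + 1 - m from by omega]
  rw [hB]
  rcases Nat.even_or_odd n with ⟨t, ht⟩ | ⟨t, ht⟩
  · rw [show n + 1 - m = m + 1 by omega]
    ring
  · rw [show n + 1 - m = m + 2 by omega, Finset.sum_range_succ (bsq n) (m + 1)]
    have hz : bsq n (m + 1) = 0 := by
      have : n.choose (m + 1) = n.choose m := by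
        rw [ht, show t = m by omega]
        exact Nat.choose_symm_half m
      unfold bsq
      rw [if_neg (by omega), this]
      simp
    rw [hz]
    ring

/-- The Catalan number `C_n` is the sum of the squares of the ballot numbers
`C(n,k) − C(n,k−1)` for `0 ≤ k ≤ ⌊n/2⌋`, with the convention `C(n,−1) = 0`. -/
theorem stmt13 (n : ℕ) :
    (catalan n : ℤ)
      = ∑ k ∈ Finset.range (n / 2 + 1),
          ((n.choose k : ℤ) - (if k = 0 then 0 else (n.choose (k - 1) : ℤ))) ^ 2 := by
  have hfull : ∑ k ∈ range (n + 2), bsq n k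
      = 2 * (((n + n).choose n : ℤ) - ((n + n).choose (n + 1) : ℤ)) := by
    have hexp : ∑ k ∈ range (n + 2), bsq n k
        = (∑ k ∈ range (n + 2), ((n.choose k : ℤ)) ^ 2)
          - 2 * (∑ k ∈ range (n + 2),
              (n.choose k : ℤ) * (if k = 0 then 0 else (n.choose (k - 1) : ℤ)))
          + ∑ k ∈ range (n + 2), (if k = 0 then (0:ℤ) else (n.choose (k - 1) : ℤ)) ^ 2 := by
      rw [Finset.mul_sum, ← Finset.sum_sub_distrib, ← Finset.sum_add_distrib]
      refine Finset.sum_congr rfl fun k _ => ?_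
      unfold bsq
      ring
    have h1 : ∑ k ∈ range (n + 2), ((n.choose k : ℤ)) ^ 2
        = ((n + n).choose n : ℤ) := by
      rw [Finset.sum_range_succ, sum_sq]
      simp [Nat.choose_succ_self]
    have h2 : ∑ k ∈ range (n + 2), (if k = 0 then (0:ℤ) else (n.choose (k - 1) : ℤ)) ^ 2
        = ((n + n).choose n : ℤ) := by
      rw [Finset.sum_range_succ']
      simp only [Nat.add_sub_cancel, if_neg (Nat.succ_ne_zero _)]
      simp [sum_sq]
    rw [hexp, h1, h2, sum_cross]
    ring
  rw [half_sum] at hfull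
  have hS : ∑ k ∈ Finset.range (n / 2 + 1),
      ((n.choose k : ℤ) - (if k = 0 then 0 else (n.choose (k - 1) : ℤ))) ^ 2
      = ((n + n).choose n : ℤ) - ((n + n).choose (n + 1) : ℤ) := by
    have : ∑ k ∈ Finset.range (n / 2 + 1),
        ((n.choose k : ℤ) - (if k = 0 then 0 else (n.choose (k - 1) : ℤ))) ^ 2
        = ∑ k ∈ range (n / 2 + 1), bsq n k := rfl
    rw [this]
    linarith
  rw [hS]
  have hc : ((n : ℤ) + 1) * catalan n = ((n + n).choose n : ℤ) := by
    have := succ_mul_catalan_eq_centralBinom n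
    have := congrArg (Nat.cast : ℕ → ℤ) this
    push_cast [Nat.centralBinom, two_mul] at this
    linarith
  have hd : ((n : ℤ) + 1) * ((n + n).choose (n + 1) : ℤ)
      = (n : ℤ) * ((n + n).choose n : ℤ) := by
    have := Nat.choose_succ_right_eq (n + n) n
    rw [show n + n - n = n by omega] at this
    have := congrArg (Nat.cast : ℕ → ℤ) this
    push_cast at this
    linarith
  have hne : ((n : ℤ) + 1) ≠ 0 := by positivity
  apply mul_left_cancel₀ hne
  rw [hc, mul_sub, hd]
  ring
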